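/- Let p ≥ 1, α ∈ [0,1), and X ∈ L^p with essSup X = M < ∞. Then EVaR_α^p(X) := inf_{t ∈ ℝ}{ t + (1/(1-α))^{1/p} ‖(X-t)⁺‖_p } ≤ M, with equality EVaR_α^p(X) → M as α → 1 in the sense that sup_{α ∈ [0,1)} EVaR_α^p(X) = M when X is bounded above. -/

import Mathlib

open MeasureTheory
open scoped ENNReal

lemma aux_l1_le_lp {Ω : Type*} [MeasurableSpace Ω] (μ : Measure Ω) [IsProbabilityMeasure μ]
    {p : ℝ} (hp : 1 ≤ p) {g : Ω → ℝ} (hg : ∀ ω, 0 ≤ g ω)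
    (hmem : MemLp g (ENNReal.ofReal p) μ) :
    ∫ ω, g ω ∂μ ≤ (∫ ω, (g ω) ^ p ∂μ) ^ (1 / p) := by
  have hp0 : 0 < p := lt_of_lt_of_le one_pos hp
  have hpe : (ENNReal.ofReal p) ≠ 0 := by simp [hp0]
  have hpt : (ENNReal.ofReal p) ≠ ⊤ := ENNReal.ofReal_ne_top
  have h1le : (1 : ℝ≥0∞) ≤ ENNReal.ofReal p := by
    simpa using ENNReal.one_le_ofReal.mpr hp
  have h1 : MemLp g 1 μ := hmem.mono_exponent h1le
  have hle := eLpNorm_le_eLpNorm_of_exponent_le h1le hmem.aestronglyMeasurable (μ := μ)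
  rw [h1.eLpNorm_eq_integral_rpow_norm one_ne_zero ENNReal.one_ne_top,
    hmem.eLpNorm_eq_integral_rpow_norm hpe hpt] at hle
  have h2 := (ENNReal.ofReal_le_ofReal_iff (by positivity)).mp hle
  simp only [ENNReal.toReal_one, Real.rpow_one, inv_one, ENNReal.toReal_ofReal hp0.le] at h2
  calc ∫ ω, g ω ∂μ = ∫ ω, ‖g ω‖ ∂μ := by
        refine integral_congr_ae (Filter.Eventually.of_forall fun ω => ?_)
        simp [Real.norm_of_nonneg (hg ω)]
    _ ≤ (∫ ω, ‖g ω‖ ^ p ∂μ) ^ p⁻¹ := h2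
    _ = (∫ ω, (g ω) ^ p ∂μ) ^ (1 / p) := by
        rw [one_div]
        congr 1
        refine integral_congr_ae (Filter.Eventually.of_forall fun ω => ?_)
        simp [Real.norm_of_nonneg (hg ω)]

/-- The Rényi entropic value-at-risk of order `p` at level `α`, in its
Rockafellar–Uryasev primal form. -/
noncomputable def EVaR {Ω : Type*} [MeasurableSpace Ω] (μ : Measure Ω)
    (p α : ℝ) (X : Ω → ℝ) : ℝ :=
  ⨅ t : ℝ, (t + (1 / (1 - α)) ^ (1 / p) * (∫ ω, (max (X ω - t) 0) ^ p ∂μ) ^ (1 / p))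

theorem stmt_16 {Ω : Type*} [MeasurableSpace Ω] (μ : Measure Ω) [IsProbabilityMeasure μ]
    (p : ℝ) (hp : 1 ≤ p) (α : ℝ) (hα : α ∈ Set.Ico (0:ℝ) 1)
    (X : Ω → ℝ) (hX : MemLp X (ENNReal.ofReal p) μ)
    (M : ℝ) (hM : essSup (fun ω => ((X ω : ℝ) : EReal)) μ = (M : EReal)) :
    EVaR μ p α X ≤ M ∧ sSup ((fun a => EVaR μ p a X) '' Set.Ico (0:ℝ) 1) = M := by
  have hp0 : 0 < p := lt_of_lt_of_le one_pos hp
  have hpinv : (0:ℝ) ≤ 1 / p := by positivity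
  have hpe : (ENNReal.ofReal p) ≠ 0 := by simp [hp0]
  have hpt : (ENNReal.ofReal p) ≠ ⊤ := ENNReal.ofReal_ne_top
  have h1le : (1 : ℝ≥0∞) ≤ ENNReal.ofReal p := by
    simpa using ENNReal.one_le_ofReal.mpr hp
  -- the positive part functions
  set g : ℝ → Ω → ℝ := fun t ω => max (X ω - t) 0 with hg_def
  have hgnn : ∀ t ω, 0 ≤ g t ω := fun t ω => le_max_right _ _
  have hgmem : ∀ t, MemLp (g t) (ENNReal.ofReal p) μ := fun t =>
    (hX.sub (memLp_const t)).pos_part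
  have hgint : ∀ t, Integrable (g t) μ := fun t => (hgmem t).integrable h1le
  have hInt : ∀ t, Integrable (fun ω => (g t ω) ^ p) μ := by
    intro t
    have := (hgmem t).integrable_norm_rpow hpe hpt
    refine this.congr (Filter.Eventually.of_forall fun ω => ?_)
    simp [Real.norm_of_nonneg (hgnn t ω), ENNReal.toReal_ofReal hp0.le]
  have hIpos : ∀ t, (0:ℝ) ≤ ∫ ω, (g t ω) ^ p ∂μ := fun t =>
    integral_nonneg fun ω => Real.rpow_nonneg (hgnn t ω) p
  have hXint : Integrable X μ := hX.integrable h1le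
  -- coefficients
  have hcnn : ∀ a : ℝ, a < 1 → (0:ℝ) ≤ (1 / (1 - a)) ^ (1 / p) := by
    intro a ha
    have : (0:ℝ) ≤ 1 / (1 - a) := div_nonneg zero_le_one (by linarith)
    exact Real.rpow_nonneg this _
  have hc1 : ∀ a : ℝ, a ∈ Set.Ico (0:ℝ) 1 → (1:ℝ) ≤ (1 / (1 - a)) ^ (1 / p) := by
    intro a ⟨ha0, ha1⟩
    apply Real.one_le_rpow _ hpinv
    rw [le_div_iff₀ (by linarith)]
    linarith
  -- lower bound: every objective value is at least ∫ X
  have hlow : ∀ a ∈ Set.Ico (0:ℝ) 1, ∀ t : ℝ,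
      ∫ ω, X ω ∂μ ≤ t + (1 / (1 - a)) ^ (1 / p) * (∫ ω, (g t ω) ^ p ∂μ) ^ (1 / p) := by
    intro a ha t
    have h1 : ∫ ω, X ω ∂μ - t ≤ ∫ ω, g t ω ∂μ := by
      have : ∫ ω, X ω ∂μ - t = ∫ ω, (X ω - t) ∂μ := by
        rw [integral_sub hXint (integrable_const t)]
        simp
      rw [this]
      exact integral_mono (hXint.sub (integrable_const t)) (hgint t)
        fun ω => le_max_left _ _
    have h2 : ∫ ω, g t ω ∂μ ≤ (∫ ω, (g t ω) ^ p ∂μ) ^ (1 / p) :=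
      aux_l1_le_lp μ hp (hgnn t) (hgmem t)
    have h3 : (∫ ω, (g t ω) ^ p ∂μ) ^ (1 / p) ≤
        (1 / (1 - a)) ^ (1 / p) * (∫ ω, (g t ω) ^ p ∂μ) ^ (1 / p) := by
      nth_rewrite 1 [← one_mul ((∫ ω, (g t ω) ^ p ∂μ) ^ (1 / p))]
      exact mul_le_mul_of_nonneg_right (hc1 a ha)
        (Real.rpow_nonneg (hIpos t) _)
    linarith
  have hbdd : ∀ a ∈ Set.Ico (0:ℝ) 1, BddBelow (Set.range fun t : ℝ =>
      t + (1 / (1 - a)) ^ (1 / p) * (∫ ω, (max (X ω - t) 0) ^ p ∂μ) ^ (1 / p)) := by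
    intro a ha
    exact ⟨∫ ω, X ω ∂μ, Set.forall_mem_range.mpr fun t => hlow a ha t⟩
  -- X ≤ M a.e.
  have hXleM : ∀ᵐ ω ∂μ, X ω ≤ M := by
    have := ae_le_essSup (f := fun ω => ((X ω : ℝ) : EReal)) (μ := μ)
    rw [hM] at this
    filter_upwards [this] with ω hω
    exact_mod_cast hω
  -- upper bound
  have hub : ∀ a ∈ Set.Ico (0:ℝ) 1, EVaR μ p a X ≤ M := by
    intro a ha
    have hzero : ∫ ω, (max (X ω - M) 0) ^ p ∂μ = 0 := by
      refine integral_eq_zero_of_ae ?_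
      filter_upwards [hXleM] with ω hω
      simp only [Pi.zero_apply]
      rw [max_eq_right (by linarith), Real.zero_rpow hp0.ne']
    have : EVaR μ p a X ≤ M + (1 / (1 - a)) ^ (1 / p) *
        (∫ ω, (max (X ω - M) 0) ^ p ∂μ) ^ (1 / p) := ciInf_le (hbdd a ha) M
    rwa [hzero, Real.zero_rpow (by positivity : (1/p : ℝ) ≠ 0), mul_zero, add_zero] at this
  refine ⟨hub α hα, ?_⟩
  -- the supremum part
  have hne : ((fun a => EVaR μ p a X) '' Set.Ico (0:ℝ) 1).Nonempty :=
    ⟨EVaR μ p 0 X, ⟨0, by constructor <;> norm_num, rfl⟩⟩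
  have hba : BddAbove ((fun a => EVaR μ p a X) '' Set.Ico (0:ℝ) 1) := by
    refine ⟨M, ?_⟩
    rintro _ ⟨a, ha, rfl⟩
    exact hub a ha
  refine le_antisymm (csSup_le hne (by rintro _ ⟨a, ha, rfl⟩; exact hub a ha)) ?_
  -- M ≤ sSup
  refine le_of_forall_pos_le_add fun ε hε => ?_
  -- measurable version of X
  set Y := hX.aestronglyMeasurable.mk X with hY_def
  have hXY : X =ᵐ[μ] Y := hX.aestronglyMeasurable.ae_eq_mk
  have hYm : Measurable Y := hX.aestronglyMeasurable.stronglyMeasurable_mk.measurable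
  set L : ℝ := M - ε with hL_def
  set s : Set Ω := {ω | L ≤ Y ω} with hs_def
  have hs : MeasurableSet s := measurableSet_le measurable_const hYm
  have hq0 : μ s ≠ 0 := by
    intro h
    have hae : ∀ᵐ ω ∂μ, Y ω < L := by
      have : ∀ᵐ ω ∂μ, ω ∉ s := by
        rw [ae_iff]
        simpa using h
      filter_upwards [this] with ω hω
      simpa [hs_def] using not_le.mp hω
    have hae' : ∀ᵐ ω ∂μ, ((X ω : ℝ) : EReal) ≤ (L : EReal) := by
      filter_upwards [hae, hXY] with ω h1 h2
      rw [h2]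
      exact_mod_cast h1.le
    have := essSup_le_of_ae_le (μ := μ) (f := fun ω => ((X ω : ℝ) : EReal)) (L : EReal) hae'
    rw [hM] at this
    have : M ≤ L := by exact_mod_cast this
    simp only [hL_def] at this
    linarith
  set q : ℝ := (μ s).toReal with hq_def
  have hqpos : 0 < q := ENNReal.toReal_pos hq0 (measure_ne_top μ s)
  have hq1 : q ≤ 1 := by
    have := prob_le_one (μ := μ) (s := s)
    calc q ≤ (1 : ℝ≥0∞).toReal := ENNReal.toReal_mono ENNReal.one_ne_top this
      _ = 1 := by simp
  set a : ℝ := 1 - q with ha_def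
  have ha : a ∈ Set.Ico (0:ℝ) 1 := ⟨by linarith, by linarith⟩
  have h1a : 1 - a = q := by ring
  -- the key lower bound for this a
  have hkey : ∀ t : ℝ, M - ε ≤ t + (1 / (1 - a)) ^ (1 / p) *
      (∫ ω, (max (X ω - t) 0) ^ p ∂μ) ^ (1 / p) := by
    intro t
    rcases le_or_gt L t with hLt | htL
    · have := mul_nonneg (hcnn a ha.2) (Real.rpow_nonneg (hIpos t) (1/p))
      simp only [hL_def] at hLt
      linarith
    · -- t < L
      have hcongr : ∫ ω, (max (X ω - t) 0) ^ p ∂μ = ∫ ω, (max (Y ω - t) 0) ^ p ∂μ := by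
        refine integral_congr_ae ?_
        filter_upwards [hXY] with ω hω
        rw [hω]
      have hIntY : Integrable (fun ω => (max (Y ω - t) 0) ^ p) μ := by
        refine (hInt t).congr ?_
        filter_upwards [hXY] with ω hω
        rw [hg_def]
        simp only
        rw [hω]
      have hset : (L - t) ^ p * q ≤ ∫ ω in s, (max (Y ω - t) 0) ^ p ∂μ := by
        rw [show (L - t) ^ p * q = μ.real s • (L - t) ^ p by rw [smul_eq_mul, mul_comm]; rfl]
        refine setIntegral_ge_of_const_le hs (measure_ne_top μ s) ?_ hIntY.integrableOn
        intro x hx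
        have hx' : L ≤ Y x := hx
        have h1 : L - t ≤ max (Y x - t) 0 := le_max_of_le_left (by linarith)
        exact Real.rpow_le_rpow (by linarith) h1 hp0.le
      have hsetle : ∫ ω in s, (max (Y ω - t) 0) ^ p ∂μ ≤ ∫ ω, (max (Y ω - t) 0) ^ p ∂μ :=
        setIntegral_le_integral hIntY
          (Filter.Eventually.of_forall fun ω => Real.rpow_nonneg (le_max_right _ _) p)
      have hmain : (L - t) ^ p * q ≤ ∫ ω, (max (X ω - t) 0) ^ p ∂μ := by
        rw [hcongr]; linarith
      have hLt0 : (0:ℝ) ≤ L - t := by linarith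
      have hbase : (0:ℝ) ≤ (L - t) ^ p * q := by positivity
      have hrp : ((L - t) ^ p * q) ^ (1 / p) ≤
          (∫ ω, (max (X ω - t) 0) ^ p ∂μ) ^ (1 / p) :=
        Real.rpow_le_rpow hbase hmain hpinv
      have hcoef : (1 / (1 - a)) ^ (1 / p) * ((L - t) ^ p * q) ^ (1 / p) = L - t := by
        rw [h1a, ← Real.mul_rpow (by positivity) hbase]
        have : 1 / q * ((L - t) ^ p * q) = (L - t) ^ p := by
          field_simp
        rw [this, ← Real.rpow_mul hLt0, mul_one_div_cancel hp0.ne', Real.rpow_one]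
      have := mul_le_mul_of_nonneg_left hrp (hcnn a ha.2)
      rw [hcoef] at this
      simp only [hL_def] at this ⊢
      linarith
  have hEv : M - ε ≤ EVaR μ p a X := le_ciInf hkey
  have hmem : EVaR μ p a X ∈ (fun a => EVaR μ p a X) '' Set.Ico (0:ℝ) 1 :=
    ⟨a, ha, rfl⟩
  have := le_csSup hba hmem
  linarith
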